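/- Let (x_n)_{n∈I} be a frame for H and (z_n)_{n∈I} a dual frame of (x_n) such that ⟨z_1, x_1⟩ ≠ 1. Then the sequence v_n = z_n + (⟨z_n, x_1⟩ / (1 − ⟨z_1, x_1⟩)) z_1, n ≥ 2, is a dual frame of (x_n)_{n≥2}; in particular x = Σ_{n≥2} ⟨x, x_n⟩ v_n for all x ∈ H. -/

import Mathlib

noncomputable section

variable {H : Type*} [NormedAddCommGroup H] [InnerProductSpace ℂ H] [CompleteSpace H]

/-- `(x n)_{n ∈ I}` is a frame for `H` with frame bounds `A`, `B`. -/
def IsFrameOn (x : ℕ → H) (I : Set ℕ) (A B : ℝ) : Prop :=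
  0 < A ∧ 0 < B ∧ ∀ h : H,
    Summable (fun n : I => ‖(inner ℂ (x n) h : ℂ)‖ ^ 2) ∧
    A * ‖h‖ ^ 2 ≤ ∑' n : I, ‖(inner ℂ (x n) h : ℂ)‖ ^ 2 ∧
    ∑' n : I, ‖(inner ℂ (x n) h : ℂ)‖ ^ 2 ≤ B * ‖h‖ ^ 2

/-- `(z n)_{n ∈ I}` is a dual frame of `(x n)_{n ∈ I}`. -/
def IsDualFrameOn (z x : ℕ → H) (I : Set ℕ) : Prop :=
  (∃ A B : ℝ, IsFrameOn z I A B) ∧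
  ∀ h : H, HasSum (fun n : I => (inner ℂ (x n) h : ℂ) • z n) h

lemma aux_hasSum_diff {E : Type*} [AddCommGroup E] [TopologicalSpace E]
    [IsTopologicalAddGroup E] (f : ℕ → E) {I : Set ℕ} {k : ℕ} (hk : k ∈ I) {a : E}
    (h : HasSum (fun n : I => f n) a) :
    HasSum (fun n : (I \ {k} : Set ℕ) => f n) (a - f k) := by
  have h' : HasSum (I.indicator f) a := hasSum_subtype_iff_indicator.mp h
  have h1 : HasSum (({k} : Set ℕ).indicator f) (f k) := by
    have : (({k} : Set ℕ).indicator f) = fun n => if n = k then f k else 0 := by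
      funext n
      by_cases hn : n = k <;> simp [Set.indicator_apply, hn]
    rw [this]
    exact hasSum_ite_eq k (f k)
  have heq : (I \ {k}).indicator f = I.indicator f - ({k} : Set ℕ).indicator f := by
    funext n
    by_cases hn : n = k
    · subst hn
      simp [Set.indicator_apply, hk]
    · by_cases hnI : n ∈ I <;> simp [Set.indicator_apply, hn, hnI]
  have hfin : HasSum ((I \ {k}).indicator f) (a - f k) := by rw [heq]; exact h'.sub h1
  exact hasSum_subtype_iff_indicator.mpr hfin

lemma aux_summable_diff {E : Type*} [NormedAddCommGroup E] [CompleteSpace E]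
    (f : ℕ → E) (I : Set ℕ) (k : ℕ)
    (h : Summable (fun n : I => f n)) :
    Summable (fun n : (I \ {k} : Set ℕ) => f n) := by
  have h' : Summable (I.indicator f) := summable_subtype_iff_indicator.mp h
  have := (h'.indicator (I \ {k}))
  rw [Set.indicator_indicator, Set.inter_eq_left.mpr Set.diff_subset] at this
  exact summable_subtype_iff_indicator.mpr this

lemma aux_tsum_diff_le (f : ℕ → ℝ) (hf : ∀ n, 0 ≤ f n) (I : Set ℕ) (k : ℕ)
    (h : Summable (fun n : I => f n)) :
    ∑' n : (I \ {k} : Set ℕ), f n ≤ ∑' n : I, f n := by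
  have h' : Summable (I.indicator f) := summable_subtype_iff_indicator.mp h
  rw [tsum_subtype, tsum_subtype]
  refine Summable.tsum_le_tsum (fun n => ?_) ?_ h'
  · exact Set.indicator_le_indicator_of_subset Set.diff_subset hf n
  · have := (h'.indicator (I \ {k}))
    rwa [Set.indicator_indicator, Set.inter_eq_left.mpr Set.diff_subset] at this

lemma aux_cs {ι : Type*} (f g : ι → ℝ) (hf0 : ∀ i, 0 ≤ f i) (hg0 : ∀ i, 0 ≤ g i)
    (hf : Summable (fun i => f i ^ 2)) (hg : Summable (fun i => g i ^ 2)) :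
    Summable (fun i => f i * g i) ∧
    (∑' i, f i * g i) ^ 2 ≤ (∑' i, f i ^ 2) * (∑' i, g i ^ 2) := by
  have hfg : Summable (fun i => f i * g i) := by
    refine (hf.add hg).of_nonneg_of_le (fun i => mul_nonneg (hf0 i) (hg0 i)) (fun i => ?_)
    nlinarith [sq_nonneg (f i - g i), sq_nonneg (f i), sq_nonneg (g i)]
  refine ⟨hfg, ?_⟩
  have hR : 0 ≤ (∑' i, f i ^ 2) * (∑' i, g i ^ 2) :=
    mul_nonneg (tsum_nonneg fun i => sq_nonneg _) (tsum_nonneg fun i => sq_nonneg _)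
  have key : ∑' i, f i * g i ≤ Real.sqrt ((∑' i, f i ^ 2) * (∑' i, g i ^ 2)) := by
    refine Summable.tsum_le_of_sum_le hfg (fun s => ?_)
    have h1 : (∑ i ∈ s, f i * g i) ^ 2 ≤ (∑ i ∈ s, f i ^ 2) * ∑ i ∈ s, g i ^ 2 :=
      Finset.sum_mul_sq_le_sq_mul_sq s f g
    have h2 : (∑ i ∈ s, f i ^ 2) * ∑ i ∈ s, g i ^ 2 ≤ (∑' i, f i ^ 2) * (∑' i, g i ^ 2) := by
      have hle1 : ∑ i ∈ s, f i ^ 2 ≤ ∑' i, f i ^ 2 :=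
        Summable.sum_le_tsum s (fun i _ => sq_nonneg _) hf
      have hle2 : ∑ i ∈ s, g i ^ 2 ≤ ∑' i, g i ^ 2 :=
        Summable.sum_le_tsum s (fun i _ => sq_nonneg _) hg
      exact mul_le_mul hle1 hle2 (Finset.sum_nonneg fun i _ => sq_nonneg _)
        (tsum_nonneg fun i => sq_nonneg _)
    have h3 : (∑ i ∈ s, f i * g i) ≤ Real.sqrt ((∑ i ∈ s, f i * g i) ^ 2) := by
      rw [Real.sqrt_sq_eq_abs]; exact le_abs_self _
    exact h3.trans (Real.sqrt_le_sqrt (h1.trans h2))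
  have h0 : 0 ≤ ∑' i, f i * g i := tsum_nonneg fun i => mul_nonneg (hf0 i) (hg0 i)
  calc (∑' i, f i * g i) ^ 2 ≤ Real.sqrt ((∑' i, f i ^ 2) * (∑' i, g i ^ 2)) ^ 2 :=
        pow_le_pow_left₀ h0 key 2
    _ = (∑' i, f i ^ 2) * (∑' i, g i ^ 2) := Real.sq_sqrt hR

/-- If `(z n)` is a dual frame of the frame `(x n)_{n ∈ I}` and `⟨z 1, x 1⟩ ≠ 1`, then
`v n = z n + (⟨z n, x 1⟩ / (1 − ⟨z 1, x 1⟩)) z 1`, `n ≥ 2`, is a dual frame of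
`(x n)_{n ≥ 2}`; in particular `h = Σ_{n ∈ I, n ≥ 2} ⟨h, x n⟩ v n` for all `h ∈ H`. -/
theorem stmt10 (x z : ℕ → H) (I : Set ℕ) (A B : ℝ) (hx : IsFrameOn x I A B)
    (hz : IsDualFrameOn z x I) (h1 : (1 : ℕ) ∈ I)
    (hne : (inner ℂ (x 1) (z 1) : ℂ) ≠ 1) :
    IsDualFrameOn
      (fun n => z n + ((inner ℂ (x 1) (z n) : ℂ) / (1 - (inner ℂ (x 1) (z 1) : ℂ))) • z 1)
      x (I \ {1}) ∧
    ∀ h : H, HasSum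
      (fun n : (I \ {1} : Set ℕ) => (inner ℂ (x n) h : ℂ) •
        (z n + ((inner ℂ (x 1) (z n) : ℂ) / (1 - (inner ℂ (x 1) (z 1) : ℂ))) • z 1)) h := by
  obtain ⟨⟨Az, Bz, hAz, hBz, hzf⟩, hrec⟩ := hz
  obtain ⟨hA, hB, hxf⟩ := hx
  have hc0 : (1 : ℂ) - (inner ℂ (x 1) (z 1) : ℂ) ≠ 0 := sub_ne_zero.mpr (Ne.symm hne)
  -- reconstruction
  have key : ∀ h : H, HasSum
      (fun n : (I \ {1} : Set ℕ) => (inner ℂ (x n) h : ℂ) •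
        (z n + ((inner ℂ (x 1) (z n) : ℂ) / (1 - (inner ℂ (x 1) (z 1) : ℂ))) • z 1)) h := by
    intro h
    have S1 : HasSum (fun n : (I \ {1} : Set ℕ) => (inner ℂ (x n) h : ℂ) • z n)
        (h - (inner ℂ (x 1) h : ℂ) • z 1) :=
      aux_hasSum_diff (fun n => (inner ℂ (x n) h : ℂ) • z n) h1 (hrec h)
    have S2 : HasSum (fun n : I => (inner ℂ (x n) h : ℂ) * (inner ℂ (x 1) (z n) : ℂ))
        (inner ℂ (x 1) h : ℂ) := by
      have := (hrec h).mapL (innerSL ℂ (x 1))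
      simpa [innerSL_apply_apply, inner_smul_right] using this
    have S3 : HasSum (fun n : (I \ {1} : Set ℕ) =>
        (inner ℂ (x n) h : ℂ) * (inner ℂ (x 1) (z n) : ℂ))
        ((inner ℂ (x 1) h : ℂ) - (inner ℂ (x 1) h : ℂ) * (inner ℂ (x 1) (z 1) : ℂ)) :=
      aux_hasSum_diff (fun n => (inner ℂ (x n) h : ℂ) * (inner ℂ (x 1) (z n) : ℂ)) h1 S2
    have S4 : HasSum (fun n : (I \ {1} : Set ℕ) =>
        (((inner ℂ (x n) h : ℂ) * (inner ℂ (x 1) (z n) : ℂ)) /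
          (1 - (inner ℂ (x 1) (z 1) : ℂ))) • z 1)
        ((inner ℂ (x 1) h : ℂ) • z 1) := by
      have h4 := (S3.div_const (1 - (inner ℂ (x 1) (z 1) : ℂ))).smul_const (z 1)
      have heq : (((inner ℂ (x 1) h : ℂ) - (inner ℂ (x 1) h : ℂ) * (inner ℂ (x 1) (z 1) : ℂ)) /
          (1 - (inner ℂ (x 1) (z 1) : ℂ))) • z 1 = (inner ℂ (x 1) h : ℂ) • z 1 := by
        congr 1
        field_simp
      rwa [heq] at h4
    have S5 := S1.add S4
    have heq2 : h - (inner ℂ (x 1) h : ℂ) • z 1 + (inner ℂ (x 1) h : ℂ) • z 1 = h := by abel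
    rw [heq2] at S5
    have hfun : (fun n : (I \ {1} : Set ℕ) => (inner ℂ (x n) h : ℂ) •
          (z n + ((inner ℂ (x 1) (z n) : ℂ) / (1 - (inner ℂ (x 1) (z 1) : ℂ))) • z 1))
        = fun n : (I \ {1} : Set ℕ) => (inner ℂ (x n) h : ℂ) • z n +
            (((inner ℂ (x n) h : ℂ) * (inner ℂ (x 1) (z n) : ℂ)) /
              (1 - (inner ℂ (x 1) (z 1) : ℂ))) • z 1 := by
      funext n
      rw [smul_add, smul_smul, mul_div_assoc]
    rw [hfun]
    exact S5
  refine ⟨⟨⟨1 / B, 2 * Bz + 2 * Bz * ‖x 1‖ ^ 2 * ‖z 1‖ ^ 2 / ‖(1 : ℂ) - (inner ℂ (x 1) (z 1) : ℂ)‖ ^ 2, ?_, ?_, ?_⟩, key⟩, key⟩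
  · positivity
  · positivity
  · intro h
    set c : ℂ := 1 - (inner ℂ (x 1) (z 1) : ℂ) with hcdef
    have hcn : (0 : ℝ) < ‖c‖ := norm_pos_iff.mpr hc0
    set K : ℝ := ‖(inner ℂ (z 1) h : ℂ)‖ / ‖c‖ with hKdef
    have hK0 : 0 ≤ K := div_nonneg (norm_nonneg _) (norm_nonneg _)
    -- pointwise bound
    have hbd : ∀ n : ℕ,
        ‖(inner ℂ (z n + ((inner ℂ (x 1) (z n) : ℂ) / c) • z 1) h : ℂ)‖ ^ 2 ≤
        2 * ‖(inner ℂ (z n) h : ℂ)‖ ^ 2 + 2 * K ^ 2 * ‖(inner ℂ (z n) (x 1) : ℂ)‖ ^ 2 := by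
      intro n
      have e : (inner ℂ (z n + ((inner ℂ (x 1) (z n) : ℂ) / c) • z 1) h : ℂ) =
          (inner ℂ (z n) h : ℂ) +
            (starRingEnd ℂ) ((inner ℂ (x 1) (z n) : ℂ) / c) * (inner ℂ (z 1) h : ℂ) := by
        rw [inner_add_left, inner_smul_left]
      have hn1 : ‖(inner ℂ (z n + ((inner ℂ (x 1) (z n) : ℂ) / c) • z 1) h : ℂ)‖ ≤
          ‖(inner ℂ (z n) h : ℂ)‖ + K * ‖(inner ℂ (z n) (x 1) : ℂ)‖ := by
        rw [e]
        refine (norm_add_le _ _).trans ?_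
        rw [norm_mul, RCLike.norm_conj, norm_div, norm_inner_symm (x 1) (z n)]
        have heq : ‖(inner ℂ (z n) (x 1) : ℂ)‖ / ‖c‖ * ‖(inner ℂ (z 1) h : ℂ)‖ =
            K * ‖(inner ℂ (z n) (x 1) : ℂ)‖ := by rw [hKdef]; ring
        rw [heq]
      set a' := ‖(inner ℂ (z n + ((inner ℂ (x 1) (z n) : ℂ) / c) • z 1) h : ℂ)‖ with ha'
      set b' := ‖(inner ℂ (z n) h : ℂ)‖ with hb'
      set q' := ‖(inner ℂ (z n) (x 1) : ℂ)‖ with hq'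
      have hsq : a' ^ 2 ≤ (b' + K * q') ^ 2 := pow_le_pow_left₀ (norm_nonneg _) hn1 2
      have hr : 2 * K ^ 2 * q' ^ 2 = 2 * (K * q') ^ 2 := by ring
      rw [hr]
      nlinarith [sq_nonneg (b' - K * q'), hsq]
    have sp : Summable (fun n : (I \ {1} : Set ℕ) => ‖(inner ℂ (z n) h : ℂ)‖ ^ 2) :=
      aux_summable_diff (fun n => ‖(inner ℂ (z n) h : ℂ)‖ ^ 2) I 1 (hzf h).1
    have sq2 : Summable (fun n : (I \ {1} : Set ℕ) => ‖(inner ℂ (z n) (x 1) : ℂ)‖ ^ 2) :=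
      aux_summable_diff (fun n => ‖(inner ℂ (z n) (x 1) : ℂ)‖ ^ 2) I 1 (hzf (x 1)).1
    have sdom : Summable (fun n : (I \ {1} : Set ℕ) =>
        2 * ‖(inner ℂ (z n) h : ℂ)‖ ^ 2 + 2 * K ^ 2 * ‖(inner ℂ (z n) (x 1) : ℂ)‖ ^ 2) :=
      (sp.mul_left 2).add (sq2.mul_left (2 * K ^ 2))
    have sv : Summable (fun n : (I \ {1} : Set ℕ) =>
        ‖(inner ℂ (z n + ((inner ℂ (x 1) (z n) : ℂ) / c) • z 1) h : ℂ)‖ ^ 2) :=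
      sdom.of_nonneg_of_le (fun n => sq_nonneg _) (fun n => hbd n)
    refine ⟨sv, ?_, ?_⟩
    · -- lower bound
      have hrecv := key h
      have S6 : HasSum (fun n : (I \ {1} : Set ℕ) =>
          (inner ℂ (x n) h : ℂ) *
            (inner ℂ h (z n + ((inner ℂ (x 1) (z n) : ℂ) / c) • z 1) : ℂ))
          ((inner ℂ h h : ℂ)) := by
        have hm := hrecv.mapL (innerSL ℂ h)
        simp only [innerSL_apply_apply, inner_smul_right] at hm
        exact hm
      set Fs : (I \ {1} : Set ℕ) → ℝ := fun n => ‖(inner ℂ (x n) h : ℂ)‖ with hFs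
      set Gs : (I \ {1} : Set ℕ) → ℝ := fun n =>
        ‖(inner ℂ h (z n + ((inner ℂ (x 1) (z n) : ℂ) / c) • z 1) : ℂ)‖ with hGs
      have sF : Summable (fun n : (I \ {1} : Set ℕ) => Fs n ^ 2) :=
        aux_summable_diff (fun n => ‖(inner ℂ (x n) h : ℂ)‖ ^ 2) I 1 (hxf h).1
      have hGs_eq : ∀ n : (I \ {1} : Set ℕ), Gs n ^ 2 =
          ‖(inner ℂ (z n + ((inner ℂ (x 1) (z n) : ℂ) / c) • z 1) h : ℂ)‖ ^ 2 := by
        intro n; rw [hGs]; simp only; rw [norm_inner_symm]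
      have sG : Summable (fun n : (I \ {1} : Set ℕ) => Gs n ^ 2) :=
        sv.congr fun n => (hGs_eq n).symm
      obtain ⟨hFG, hCS⟩ := aux_cs Fs Gs (fun n => norm_nonneg _) (fun n => norm_nonneg _) sF sG
      have hnorm : ‖(inner ℂ h h : ℂ)‖ ≤ ∑' n : (I \ {1} : Set ℕ), Fs n * Gs n := by
        rw [← S6.tsum_eq]
        refine (norm_tsum_le_tsum_norm ?_).trans_eq ?_
        · exact hFG.congr fun n => (norm_mul _ _).symm
        · exact tsum_congr fun n => norm_mul _ _
      have hhh : ‖(inner ℂ h h : ℂ)‖ = ‖h‖ ^ 2 := by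
        rw [inner_self_eq_norm_sq_to_K]
        simp [abs_of_nonneg (norm_nonneg h)]
      have hF2 : ∑' n : (I \ {1} : Set ℕ), Fs n ^ 2 ≤ B * ‖h‖ ^ 2 :=
        (aux_tsum_diff_le (fun n => ‖(inner ℂ (x n) h : ℂ)‖ ^ 2)
          (fun n => sq_nonneg _) I 1 (hxf h).1).trans (hxf h).2.2
      have hG2 : ∑' n : (I \ {1} : Set ℕ), Gs n ^ 2 =
          ∑' n : (I \ {1} : Set ℕ),
            ‖(inner ℂ (z n + ((inner ℂ (x 1) (z n) : ℂ) / c) • z 1) h : ℂ)‖ ^ 2 :=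
        tsum_congr hGs_eq
      set S : ℝ := ∑' n : (I \ {1} : Set ℕ),
        ‖(inner ℂ (z n + ((inner ℂ (x 1) (z n) : ℂ) / c) • z 1) h : ℂ)‖ ^ 2 with hSdef
      have hS0 : 0 ≤ S := tsum_nonneg fun n => sq_nonneg _
      set T : ℝ := ∑' n : (I \ {1} : Set ℕ), Fs n * Gs n with hTdef
      have hT0 : 0 ≤ T := tsum_nonneg fun n => mul_nonneg (norm_nonneg _) (norm_nonneg _)
      have h2 : ‖h‖ ^ 2 ≤ T := hhh ▸ hnorm
      have h3 : T ^ 2 ≤ (B * ‖h‖ ^ 2) * S := by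
        rw [hG2] at hCS
        calc T ^ 2 ≤ (∑' n : (I \ {1} : Set ℕ), Fs n ^ 2) * S := hCS
          _ ≤ (B * ‖h‖ ^ 2) * S := mul_le_mul_of_nonneg_right hF2 hS0
      have h4 : ‖h‖ ^ 2 * ‖h‖ ^ 2 ≤ T * T :=
        mul_self_le_mul_self (sq_nonneg _) h2
      by_cases hh0 : ‖h‖ = 0
      · rw [hh0]
        simpa using hS0
      · have hpos : 0 < ‖h‖ ^ 2 := by positivity
        have h5 : ‖h‖ ^ 2 ≤ B * S := by nlinarith
        rw [one_div, inv_mul_le_iff₀ hB]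
        linarith [h5]
    · -- upper bound
      have tle : (∑' n : (I \ {1} : Set ℕ),
          ‖(inner ℂ (z n + ((inner ℂ (x 1) (z n) : ℂ) / c) • z 1) h : ℂ)‖ ^ 2) ≤
          ∑' n : (I \ {1} : Set ℕ),
            (2 * ‖(inner ℂ (z n) h : ℂ)‖ ^ 2 + 2 * K ^ 2 * ‖(inner ℂ (z n) (x 1) : ℂ)‖ ^ 2) :=
        Summable.tsum_le_tsum (fun n => hbd n) sv sdom
      have tsplit : (∑' n : (I \ {1} : Set ℕ),
          (2 * ‖(inner ℂ (z n) h : ℂ)‖ ^ 2 + 2 * K ^ 2 * ‖(inner ℂ (z n) (x 1) : ℂ)‖ ^ 2)) =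
          2 * (∑' n : (I \ {1} : Set ℕ), ‖(inner ℂ (z n) h : ℂ)‖ ^ 2) +
          2 * K ^ 2 * (∑' n : (I \ {1} : Set ℕ), ‖(inner ℂ (z n) (x 1) : ℂ)‖ ^ 2) := by
        rw [Summable.tsum_add (sp.mul_left 2) (sq2.mul_left (2 * K ^ 2)), tsum_mul_left, tsum_mul_left]
      have tpe : (∑' n : (I \ {1} : Set ℕ), ‖(inner ℂ (z n) h : ℂ)‖ ^ 2) ≤ Bz * ‖h‖ ^ 2 :=
        (aux_tsum_diff_le (fun n => ‖(inner ℂ (z n) h : ℂ)‖ ^ 2)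
          (fun n => sq_nonneg _) I 1 (hzf h).1).trans (hzf h).2.2
      have tqe : (∑' n : (I \ {1} : Set ℕ), ‖(inner ℂ (z n) (x 1) : ℂ)‖ ^ 2) ≤ Bz * ‖x 1‖ ^ 2 :=
        (aux_tsum_diff_le (fun n => ‖(inner ℂ (z n) (x 1) : ℂ)‖ ^ 2)
          (fun n => sq_nonneg _) I 1 (hzf (x 1)).1).trans (hzf (x 1)).2.2
      have hKle : K ≤ ‖z 1‖ * ‖h‖ / ‖c‖ := by
        rw [hKdef]
        gcongr
        exact norm_inner_le_norm _ _
      have hK2 : K ^ 2 ≤ (‖z 1‖ * ‖h‖ / ‖c‖) ^ 2 := pow_le_pow_left₀ hK0 hKle 2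
      have tq0 : 0 ≤ ∑' n : (I \ {1} : Set ℕ), ‖(inner ℂ (z n) (x 1) : ℂ)‖ ^ 2 :=
        tsum_nonneg fun n => sq_nonneg _
      have step : 2 * K ^ 2 * (∑' n : (I \ {1} : Set ℕ), ‖(inner ℂ (z n) (x 1) : ℂ)‖ ^ 2) ≤
          2 * ((‖z 1‖ * ‖h‖ / ‖c‖) ^ 2 * (Bz * ‖x 1‖ ^ 2)) := by
        nlinarith [mul_le_mul hK2 tqe tq0 (sq_nonneg (‖z 1‖ * ‖h‖ / ‖c‖))]
      have rhseq : 2 * (Bz * ‖h‖ ^ 2) + 2 * ((‖z 1‖ * ‖h‖ / ‖c‖) ^ 2 * (Bz * ‖x 1‖ ^ 2)) =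
          (2 * Bz + 2 * Bz * ‖x 1‖ ^ 2 * ‖z 1‖ ^ 2 / ‖c‖ ^ 2) * ‖h‖ ^ 2 := by
        field_simp
      calc (∑' n : (I \ {1} : Set ℕ),
          ‖(inner ℂ (z n + ((inner ℂ (x 1) (z n) : ℂ) / c) • z 1) h : ℂ)‖ ^ 2)
          ≤ 2 * (∑' n : (I \ {1} : Set ℕ), ‖(inner ℂ (z n) h : ℂ)‖ ^ 2) +
            2 * K ^ 2 * (∑' n : (I \ {1} : Set ℕ), ‖(inner ℂ (z n) (x 1) : ℂ)‖ ^ 2) := by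
            rw [← tsplit]; exact tle
        _ ≤ 2 * (Bz * ‖h‖ ^ 2) + 2 * ((‖z 1‖ * ‖h‖ / ‖c‖) ^ 2 * (Bz * ‖x 1‖ ^ 2)) := by
            have := mul_le_mul_of_nonneg_left tpe (by norm_num : (0:ℝ) ≤ 2)
            linarith [step]
        _ = (2 * Bz + 2 * Bz * ‖x 1‖ ^ 2 * ‖z 1‖ ^ 2 / ‖c‖ ^ 2) * ‖h‖ ^ 2 := rhseq

end
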